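/- Fix x ∈ ℕ. With T the 2-abacus of the partition (1) (first gap at (0,0)) and 𝒯(x) the set of 2-abaci U with w(U)=x and U↑ = T, the set of possible values of Rem(U₁) (number of removable beads on the right runner) as U ranges over 𝒯(x) is exactly {1, 2, …, f(x)+1}, where f(x) = max{y : y(y+1) ≤ x}. -/

import Mathlib

/-- `f x = max {y : ℕ | y * (y + 1) ≤ x}`. -/
def f (x : ℕ) : ℕ := Nat.findGreatest (fun y => y * (y + 1) ≤ x) x

/-- A 2-abacus is modelled as a finite set `B ⊆ ℕ` of bead positions: the bead at
position `n` lies in row `n / 2` on runner `n % 2` (rows increase downwards; all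
rows above the displayed window are full). `rem2 B` is the number of removable
beads on the right runner: beads at `(i,1)` with `(i,0)` empty. -/
def rem2 (B : Finset ℕ) : ℕ := (B.filter fun n => n % 2 = 1 ∧ n - 1 ∉ B).card

/-- The set of values `Rem(U₁)` over 2-abaci `U` with `w(U) = x` and `U↑ = T`,
where `T` is the 2-abacus of the partition `(1)` displayed with `r + 1` rows:
beads in all positions of rows `0, …, r - 1` and a bead at `(r, 1)`; first gap
at `(r, 0)`.  The condition `U↑ = T` says runner `0` carries `r` beads and
runner `1` carries `r + 1` beads, and `w(U) = x` says the total row-sum of `U`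
exceeds that of `T` by exactly `x`. -/
def remSetOne (x : ℕ) : Set ℕ :=
  {m | ∃ r : ℕ, ∃ B : Finset ℕ,
    (B.filter fun n => n % 2 = 0).card = r ∧
    (B.filter fun n => n % 2 = 1).card = r + 1 ∧
    (∑ b ∈ B, b / 2) = x + r * r ∧
    m = rem2 B}

/-- Sum of a finset of naturals is at least `card*(card-1)/2`, additively. -/
lemma sum_card_sq (S : Finset ℕ) : S.card * S.card ≤ 2 * (∑ i ∈ S, i) + S.card := by
  induction S using Finset.induction_on_max with
  | empty => simp
  | insert a s ha ih =>
    have hna : a ∉ s := fun h => lt_irrefl a (ha a h)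
    have hs : s.card ≤ a := by
      have hsub : s ⊆ Finset.range a := fun y hy => Finset.mem_range.mpr (ha y hy)
      simpa using Finset.card_le_card hsub
    rw [Finset.card_insert_of_notMem hna, Finset.sum_insert hna]
    nlinarith [ih]

lemma sum_stair (k : ℕ) :
    (∑ i ∈ Finset.range k, 2*i) + (∑ i ∈ Finset.range k, (2*i+1)) + k = 2*k*k := by
  induction k with
  | zero => simp
  | succ k ih =>
    rw [Finset.sum_range_succ, Finset.sum_range_succ]
    nlinarith [ih]


set_option maxHeartbeats 1600000 in
/-- The set of possible values of `Rem(U₁)`, over all 2-abaci `U` with `w(U) = x`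
and `U↑` equal to the 2-abacus of the partition `(1)`, is exactly
`{1, 2, …, f x + 1}`. -/
theorem rem_set_eq_Icc (x : ℕ) : remSetOne x = {m | 1 ≤ m ∧ m ≤ f x + 1} := by
  ext m
  simp only [remSetOne, Set.mem_setOf_eq]
  constructor
  · rintro ⟨r, B, h0, h1, hsum, rfl⟩
    set A0 := (B.filter fun n => n % 2 = 0).image (· / 2) with hA0
    set A1 := (B.filter fun n => n % 2 = 1).image (· / 2) with hA1
    have hinj0 : ∀ a ∈ (B.filter fun n => n % 2 = 0), ∀ b ∈ (B.filter fun n => n % 2 = 0),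
        a / 2 = b / 2 → a = b := by
      intro a ha b hb hab
      simp only [Finset.mem_filter] at ha hb
      omega
    have hinj1 : ∀ a ∈ (B.filter fun n => n % 2 = 1), ∀ b ∈ (B.filter fun n => n % 2 = 1),
        a / 2 = b / 2 → a = b := by
      intro a ha b hb hab
      simp only [Finset.mem_filter] at ha hb
      omega
    have hcard0 : A0.card = r := by
      rw [hA0, Finset.card_image_of_injOn (fun a ha b hb => hinj0 a ha b hb), h0]
    have hcard1 : A1.card = r + 1 := by
      rw [hA1, Finset.card_image_of_injOn (fun a ha b hb => hinj1 a ha b hb), h1]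
    have hmem0 : ∀ j, j ∈ A0 ↔ 2*j ∈ B := by
      intro j
      simp only [hA0, Finset.mem_image, Finset.mem_filter]
      constructor
      · rintro ⟨n, ⟨hnB, hpar⟩, hj⟩
        have : n = 2*j := by omega
        subst this; exact hnB
      · intro h
        exact ⟨2*j, ⟨h, by omega⟩, by omega⟩
    have hmem1 : ∀ j, j ∈ A1 ↔ 2*j+1 ∈ B := by
      intro j
      simp only [hA1, Finset.mem_image, Finset.mem_filter]
      constructor
      · rintro ⟨n, ⟨hnB, hpar⟩, hj⟩
        have : n = 2*j+1 := by omega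
        subst this; exact hnB
      · intro h
        exact ⟨2*j+1, ⟨h, by omega⟩, by omega⟩
    -- rem2 B = card (A1 \ A0)
    have himg : (B.filter fun n => n % 2 = 1 ∧ n - 1 ∉ B).image (· / 2) = A1 \ A0 := by
      ext j
      simp only [Finset.mem_image, Finset.mem_filter, Finset.mem_sdiff, hmem0 j, hmem1 j]
      constructor
      · rintro ⟨n, ⟨hnB, hpar, hn1⟩, hj⟩
        have hn : n = 2*j+1 := by omega
        subst hn
        have h2j : 2*j+1-1 = 2*j := by omega
        rw [h2j] at hn1
        exact ⟨hnB, hn1⟩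
      · rintro ⟨h1', h0'⟩
        refine ⟨2*j+1, ⟨h1', by omega, ?_⟩, by omega⟩
        have h2j : 2*j+1-1 = 2*j := by omega
        rw [h2j]; exact h0'
    have hrem : rem2 B = (A1 \ A0).card := by
      rw [rem2, ← himg]
      rw [Finset.card_image_of_injOn]
      intro a ha b hb hab
      simp only [Finset.coe_filter, Set.mem_setOf_eq] at ha hb
      simp only at hab
      omega
    -- sums over rows
    have hS : (∑ j ∈ A0, j) + (∑ j ∈ A1, j) = x + r * r := by
      have e0 : (∑ j ∈ A0, j) = ∑ n ∈ B.filter (fun n => n % 2 = 0), n / 2 :=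
        Finset.sum_image hinj0
      have e1 : (∑ j ∈ A1, j) = ∑ n ∈ B.filter (fun n => n % 2 = 1), n / 2 :=
        Finset.sum_image hinj1
      have efil : B.filter (fun n => ¬ n % 2 = 0) = B.filter (fun n => n % 2 = 1) :=
        Finset.filter_congr (fun n _ => by omega)
      rw [e0, e1, ← efil, Finset.sum_filter_add_sum_filter_not B (fun n => n % 2 = 0), hsum]
    -- counting
    have hge1 : 1 ≤ (A1 \ A0).card := by
      have := Finset.le_card_sdiff A0 A1
      omega
    refine ⟨by omega, ?_⟩
    obtain ⟨k, hk⟩ : ∃ k, (A1 \ A0).card = k + 1 := ⟨(A1 \ A0).card - 1, by omega⟩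
    have hinter : (A1 ∩ A0).card + (k + 1) = r + 1 := by
      rw [← hk, Finset.card_inter_add_card_sdiff, hcard1]
    have hunion : (k + 1) + r = (A1 ∪ A0).card := by
      rw [← hk, ← hcard0]; exact Finset.card_sdiff_add_card A1 A0
    have hsu : (∑ j ∈ A1 ∪ A0, j) + (∑ j ∈ A1 ∩ A0, j) = x + r * r := by
      rw [Finset.sum_union_inter]; omega
    have b1 := sum_card_sq (A1 ∪ A0)
    have b2 := sum_card_sq (A1 ∩ A0)
    set c := (A1 ∩ A0).card with hc
    have hcr : r = c + k := by omega
    rw [← hunion] at b1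
    have hkx : k * (k + 1) ≤ x := by nlinarith [b1, b2, hsu, hcr]
    have hkfx : k ≤ f x := by
      unfold f
      exact Nat.le_findGreatest (by nlinarith) hkx
    omega
  · rintro ⟨hm1, hm2⟩
    obtain ⟨k, rfl⟩ : ∃ k, m = k + 1 := ⟨m - 1, by omega⟩
    have hfx : f x * (f x + 1) ≤ x :=
      Nat.findGreatest_spec (P := fun y => y * (y + 1) ≤ x) (Nat.zero_le x) (by simp)
    have hkx : k * (k + 1) ≤ x := by
      have hkf : k ≤ f x := by
        simp only [f] at hm2 ⊢
        omega
      calc k * (k + 1) ≤ f x * (f x + 1) := Nat.mul_le_mul hkf (by omega)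
        _ ≤ x := hfx
    set d := x - k * (k + 1) with hd
    have hx : x = k * (k + 1) + d := by omega
    set B : Finset ℕ := ((Finset.range k).image (fun i => 4*i+1)) ∪
      ((Finset.range k).image (fun i => 4*i+2)) ∪ {4*k+2*d+1} with hB
    have hmem : ∀ n, n ∈ B ↔
        (∃ i < k, n = 4*i+1) ∨ (∃ i < k, n = 4*i+2) ∨ n = 4*k+2*d+1 := by
      intro n
      simp only [hB, Finset.mem_union, Finset.mem_image, Finset.mem_range,
        Finset.mem_singleton]
      constructor
      · rintro ((⟨i, hi, rfl⟩ | ⟨i, hi, rfl⟩) | h)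
        · exact Or.inl ⟨i, hi, rfl⟩
        · exact Or.inr (Or.inl ⟨i, hi, rfl⟩)
        · exact Or.inr (Or.inr h)
      · rintro (⟨i, hi, rfl⟩ | ⟨i, hi, rfl⟩ | h)
        · exact Or.inl (Or.inl ⟨i, hi, rfl⟩)
        · exact Or.inl (Or.inr ⟨i, hi, rfl⟩)
        · exact Or.inr h
    have heven : B.filter (fun n => n % 2 = 0) = (Finset.range k).image (fun i => 4*i+2) := by
      ext n
      simp only [Finset.mem_filter, hmem n, Finset.mem_image, Finset.mem_range]
      constructor
      · rintro ⟨(⟨i, hi, rfl⟩ | ⟨i, hi, rfl⟩ | rfl), hpar⟩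
        · omega
        · exact ⟨i, hi, rfl⟩
        · omega
      · rintro ⟨i, hi, rfl⟩
        exact ⟨Or.inr (Or.inl ⟨i, hi, rfl⟩), by omega⟩
    have hodd : B.filter (fun n => n % 2 = 1) =
        insert (4*k+2*d+1) ((Finset.range k).image (fun i => 4*i+1)) := by
      ext n
      simp only [Finset.mem_filter, hmem n, Finset.mem_insert, Finset.mem_image,
        Finset.mem_range]
      constructor
      · rintro ⟨(⟨i, hi, rfl⟩ | ⟨i, hi, rfl⟩ | rfl), hpar⟩
        · exact Or.inr ⟨i, hi, rfl⟩
        · omega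
        · exact Or.inl rfl
      · rintro (rfl | ⟨i, hi, rfl⟩)
        · exact ⟨Or.inr (Or.inr rfl), by omega⟩
        · exact ⟨Or.inl ⟨i, hi, rfl⟩, by omega⟩
    have hinj1 : Function.Injective (fun i => 4*i+1) := by
      intro a b h; simp only at h; omega
    have hinj2 : Function.Injective (fun i => 4*i+2) := by
      intro a b h; simp only at h; omega
    refine ⟨k, B, ?_, ?_, ?_, ?_⟩
    · rw [heven, Finset.card_image_of_injective _ hinj2, Finset.card_range]
    · rw [hodd, Finset.card_insert_of_notMem, Finset.card_image_of_injective _ hinj1,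
        Finset.card_range]
      simp only [Finset.mem_image, Finset.mem_range]
      rintro ⟨i, hi, hcontra⟩
      omega
    · -- sum
      have hd1 : Disjoint ((Finset.range k).image (fun i => 4*i+1))
          ((Finset.range k).image (fun i => 4*i+2)) := by
        rw [Finset.disjoint_left]
        simp only [Finset.mem_image, Finset.mem_range]
        rintro n ⟨i, hi, rfl⟩ ⟨j, hj, hcontra⟩
        omega
      have hd2 : Disjoint (((Finset.range k).image (fun i => 4*i+1)) ∪
          ((Finset.range k).image (fun i => 4*i+2))) ({4*k+2*d+1} : Finset ℕ) := by
        rw [Finset.disjoint_left]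
        simp only [Finset.mem_union, Finset.mem_image, Finset.mem_range,
          Finset.mem_singleton]
        rintro n (⟨i, hi, rfl⟩ | ⟨i, hi, rfl⟩) hcontra <;> omega
      have si1 : (∑ n ∈ (Finset.range k).image (fun i => 4*i+1), n / 2)
          = ∑ i ∈ Finset.range k, (4*i+1) / 2 :=
        Finset.sum_image (by intro a _ b _ h; simp only at h; omega)
      have si2 : (∑ n ∈ (Finset.range k).image (fun i => 4*i+2), n / 2)
          = ∑ i ∈ Finset.range k, (4*i+2) / 2 :=
        Finset.sum_image (by intro a _ b _ h; simp only at h; omega)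
      rw [hB, Finset.sum_union hd2, Finset.sum_union hd1, Finset.sum_singleton, si1, si2]
      have e1 : ∀ i ∈ Finset.range k, (4*i+1)/2 = 2*i := fun i _ => by omega
      have e2 : ∀ i ∈ Finset.range k, (4*i+2)/2 = 2*i+1 := fun i _ => by omega
      rw [Finset.sum_congr rfl e1, Finset.sum_congr rfl e2]
      have := sum_stair k
      have h3 : (4*k+2*d+1)/2 = 2*k+d := by omega
      rw [h3]
      nlinarith [this, hx]
    · -- rem2
      have hfc : B.filter (fun n => n % 2 = 1 ∧ n - 1 ∉ B) = B.filter (fun n => n % 2 = 1) := by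
        apply Finset.filter_congr
        intro n hn
        rw [hmem n] at hn
        constructor
        · rintro ⟨hpar, _⟩; exact hpar
        · intro hpar
          refine ⟨hpar, ?_⟩
          intro hcontra
          rw [hmem (n-1)] at hcontra
          rcases hn with ⟨i, hi, rfl⟩ | ⟨i, hi, rfl⟩ | rfl
          · rcases hcontra with ⟨j, hj, hc⟩ | ⟨j, hj, hc⟩ | hc <;> omega
          · omega
          · rcases hcontra with ⟨j, hj, hc⟩ | ⟨j, hj, hc⟩ | hc <;> omega
      rw [rem2, hfc, hodd, Finset.card_insert_of_notMem, Finset.card_image_of_injective _ hinj1,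
        Finset.card_range]
      simp only [Finset.mem_image, Finset.mem_range]
      rintro ⟨i, hi, hcontra⟩
      omega
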